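/- Fix k ≥ 2 and probability measures α, β on X, and consider the 'sparse' collection (μ_1,…,μ_k) with μ_1 = ⋯ = μ_{k−1} = α and μ_k = β. Then MOT(μ_1,…,μ_k) = ((k−1)/k²)·W₂²(α, β). -/

import Mathlib

open scoped BigOperators

/-- The variance cost of the tuple `(x_{t 1}, …, x_{t k})`. -/
noncomputable def motCost {d k N : ℕ} (x : Fin N → EuclideanSpace ℝ (Fin d))
    (t : Fin k → Fin N) : ℝ :=
  (k : ℝ)⁻¹ * ∑ i, ‖x (t i) - (k : ℝ)⁻¹ • ∑ m, x (t m)‖ ^ 2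

/-- A probability measure on a finite set with `N` points. -/
def IsProbVec {N : ℕ} (μ : Fin N → ℝ) : Prop :=
  (∀ j, 0 ≤ μ j) ∧ ∑ j, μ j = 1

/-- A multicoupling of `(μ_1,…,μ_k)`. -/
def IsMulticoupling {k N : ℕ} (μ : Fin k → Fin N → ℝ)
    (π : (Fin k → Fin N) → ℝ) : Prop :=
  (∀ t, 0 ≤ π t) ∧ (∑ t, π t = 1) ∧
    ∀ (i : Fin k) (j : Fin N),
      ∑ t ∈ Finset.univ.filter (fun t : Fin k → Fin N => t i = j), π t = μ i j

/-- The optimal value of the multimarginal optimal transport program. -/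
noncomputable def MOT {d k N : ℕ} (x : Fin N → EuclideanSpace ℝ (Fin d))
    (μ : Fin k → Fin N → ℝ) : ℝ :=
  sInf {v | ∃ π, IsMulticoupling μ π ∧ v = ∑ t, motCost x t * π t}

/-- The squared 2-Wasserstein distance between two measures on `X`. -/
noncomputable def W2sq {d N : ℕ} (x : Fin N → EuclideanSpace ℝ (Fin d))
    (α β : Fin N → ℝ) : ℝ :=
  sInf {v | ∃ γ : Fin N → Fin N → ℝ,
    (∀ j l, 0 ≤ γ j l) ∧ (∑ j, ∑ l, γ j l = 1) ∧
    (∀ j, ∑ l, γ j l = α j) ∧ (∀ l, ∑ j, γ j l = β l) ∧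
    v = ∑ j, ∑ l, ‖x j - x l‖ ^ 2 * γ j l}

lemma variance_identity {E : Type*} [NormedAddCommGroup E] [InnerProductSpace ℝ E]
    {k : ℕ} (hk : 0 < k) (y : Fin k → E) :
    ∑ i, ‖y i - (k:ℝ)⁻¹ • ∑ m, y m‖ ^ 2
      = (2 * (k:ℝ) ^ 2)⁻¹ * ((k:ℝ) * ∑ i, ∑ j, ‖y i - y j‖ ^ 2) := by
  have hk0 : (k:ℝ) ≠ 0 := Nat.cast_ne_zero.2 hk.ne'
  set m : E := (k:ℝ)⁻¹ • ∑ i, y i with hm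
  set z : Fin k → E := fun i => y i - m with hz
  have hzsum : ∑ i, z i = 0 := by
    simp only [hz, Finset.sum_sub_distrib, Finset.sum_const, Finset.card_univ,
      Fintype.card_fin, ← Nat.cast_smul_eq_nsmul ℝ, hm, smul_smul]
    rw [mul_inv_cancel₀ hk0, one_smul, sub_self]
  have key : ∑ i, ∑ j, ‖y i - y j‖ ^ 2 = 2 * (k:ℝ) * ∑ i, ‖z i‖ ^ 2 := by
    have h1 : ∀ i j : Fin k, ‖y i - y j‖ ^ 2
        = ‖z i‖ ^ 2 - 2 * (inner ℝ (z i) (z j) : ℝ) + ‖z j‖ ^ 2 := by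
      intro i j
      have : y i - y j = z i - z j := by simp [hz]
      rw [this, norm_sub_sq_real]
    have hz2 : ∑ i : Fin k, ∑ j : Fin k, (inner ℝ (z i) (z j) : ℝ) = 0 := by
      simp_rw [← inner_sum, hzsum, inner_zero_right, Finset.sum_const_zero]
    simp_rw [h1]
    simp only [Finset.sum_add_distrib, Finset.sum_sub_distrib, Finset.sum_const,
      Finset.card_univ, Fintype.card_fin, ← Finset.mul_sum, hz2,
      ← Nat.cast_smul_eq_nsmul ℝ, smul_eq_mul]
    ring
  have hzz : ∀ i, ‖y i - m‖ ^ 2 = ‖z i‖ ^ 2 := fun i => rfl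
  simp_rw [hzz, key]
  field_simp

lemma motCost_eq {d k N : ℕ} (hk : 0 < k) (x : Fin N → EuclideanSpace ℝ (Fin d))
    (t : Fin k → Fin N) :
    motCost x t = (2 * (k:ℝ) ^ 2)⁻¹ * ∑ i, ∑ j, ‖x (t i) - x (t j)‖ ^ 2 := by
  have hk0 : (k:ℝ) ≠ 0 := Nat.cast_ne_zero.2 hk.ne'
  rw [motCost, variance_identity hk (fun i => x (t i))]
  field_simp

lemma sum_range_inj {A B : Type*} [Fintype A] [Fintype B] [DecidableEq B]
    (e : A → B) (he : Function.Injective e) (f : B → ℝ)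
    (hf : ∀ b, f b ≠ 0 → ∃ a, e a = b) :
    ∑ b, f b = ∑ a, f (e a) := by
  rw [← Finset.sum_image (f := f) (g := e) (fun a _ b _ h => he h)]
  apply (Finset.sum_subset (Finset.subset_univ _) ?_).symm
  intro b _ hb
  by_contra h
  obtain ⟨a, ha⟩ := hf b h
  exact hb (Finset.mem_image.2 ⟨a, Finset.mem_univ _, ha⟩)

theorem mot_sparse {d k N : ℕ} (hk : 2 ≤ k)
    (x : Fin N → EuclideanSpace ℝ (Fin d)) (hx : Function.Injective x)
    (α β : Fin N → ℝ) (hα : IsProbVec α) (hβ : IsProbVec β)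
    (μ : Fin k → Fin N → ℝ)
    (hμ₁ : ∀ i : Fin k, (i : ℕ) < k - 1 → μ i = α)
    (hμ₂ : μ ⟨k - 1, by omega⟩ = β) :
    MOT x μ = ((k : ℝ) - 1) / (k : ℝ) ^ 2 * W2sq x α β := by
  classical
  have hkpos : 0 < k := by omega
  have hk0 : (k:ℝ) ≠ 0 := Nat.cast_ne_zero.2 hkpos.ne'
  have hk2 : (2:ℝ) ≤ (k:ℝ) := by exact_mod_cast hk
  have hk1 : ((k:ℝ) - 1) ≠ 0 := by linarith
  have hk1pos : (0:ℝ) < (k:ℝ) - 1 := by linarith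
  set c : ℝ := ((k : ℝ) - 1) / (k : ℝ) ^ 2 with hc
  have hcpos : 0 < c := by rw [hc]; positivity
  set last : Fin k := ⟨k - 1, by omega⟩ with hlast
  set i0 : Fin k := ⟨0, by omega⟩ with hi0
  set I : Finset (Fin k) := Finset.univ.filter (fun i => (i:ℕ) < k - 1) with hIdef
  have hIcard : I.card = k - 1 := by
    have h : I = Finset.Iio last := by
      ext i; simp [hIdef, Finset.mem_Iio, Fin.lt_def, hlast]
    rw [h, Fin.card_Iio]
  have hIcast : (I.card : ℝ) = (k:ℝ) - 1 := by
    rw [hIcard, Nat.cast_sub (by omega), Nat.cast_one]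
  have hlast_or : ∀ i : Fin k, (i:ℕ) < k - 1 ∨ i = last := by
    intro i
    rcases lt_or_ge (i:ℕ) (k-1) with h | h
    · exact Or.inl h
    · right; apply Fin.ext; have := i.isLt; simp [hlast]; omega
  have hmemI : ∀ i ∈ I, (i:ℕ) < k - 1 := by
    intro i hi; rw [hIdef] at hi; exact (Finset.mem_filter.1 hi).2
  -- the two feasible sets
  set SA : Set ℝ := {v | ∃ π, IsMulticoupling μ π ∧ v = ∑ t, motCost x t * π t} with hSA
  set SB : Set ℝ := {v | ∃ γ : Fin N → Fin N → ℝ,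
    (∀ j l, 0 ≤ γ j l) ∧ (∑ j, ∑ l, γ j l = 1) ∧
    (∀ j, ∑ l, γ j l = α j) ∧ (∀ l, ∑ j, γ j l = β l) ∧
    v = ∑ j, ∑ l, ‖x j - x l‖ ^ 2 * γ j l} with hSB
  have hMOT : MOT x μ = sInf SA := rfl
  have hW : W2sq x α β = sInf SB := rfl
  -- bounded below
  have hBddB : BddBelow SB := by
    refine ⟨0, fun v hv => ?_⟩
    obtain ⟨γ, h1, _, _, _, h5⟩ := hv
    rw [h5]
    exact Finset.sum_nonneg fun j _ => Finset.sum_nonneg fun l _ =>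
      mul_nonneg (by positivity) (h1 j l)
  have hBddA : BddBelow SA := by
    refine ⟨0, fun v hv => ?_⟩
    obtain ⟨π, hπ, h5⟩ := hv
    rw [h5]
    refine Finset.sum_nonneg fun t _ => mul_nonneg ?_ (hπ.1 t)
    rw [motCost]
    positivity
  have hBne : SB.Nonempty := by
    refine ⟨∑ j, ∑ l, ‖x j - x l‖ ^ 2 * (α j * β l), fun j l => α j * β l,
      fun j l => mul_nonneg (hα.1 j) (hβ.1 l), ?_, fun j => ?_, fun l => ?_, rfl⟩
    · simp_rw [← Finset.mul_sum, hβ.2, mul_one, hα.2]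
    · rw [← Finset.mul_sum, hβ.2, mul_one]
    · rw [← Finset.sum_mul, hα.2, one_mul]
  -- the sparse embedding
  set e : Fin N × Fin N → (Fin k → Fin N) :=
    fun p i => if (i:ℕ) < k - 1 then p.1 else p.2 with he
  have he_i0 : ∀ p, e p i0 = p.1 := by intro p; simp [he, hi0]; omega
  have he_last : ∀ p, e p last = p.2 := by intro p; simp [he, hlast]
  have he_inj : Function.Injective e := by
    intro p q h
    have h1 : p.1 = q.1 := by rw [← he_i0 p, ← he_i0 q, h]
    have h2 : p.2 = q.2 := by rw [← he_last p, ← he_last q, h]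
    exact Prod.ext h1 h2
  -- cost of a sparse tuple
  have hcost_e : ∀ p : Fin N × Fin N, motCost x (e p) = c * ‖x p.1 - x p.2‖ ^ 2 := by
    intro p
    rw [motCost_eq hkpos]
    set D : ℝ := ‖x p.1 - x p.2‖ ^ 2 with hD
    have hterm : ∀ i j : Fin k, ‖x (e p i) - x (e p j)‖ ^ 2
        = if (i:ℕ) < k - 1 then (if (j:ℕ) < k - 1 then 0 else D)
          else (if (j:ℕ) < k - 1 then D else 0) := by
      intro i j
      simp only [he]
      split_ifs <;> simp [hD, norm_sub_rev (x p.2) (x p.1)]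
    have hsum_ite : ∀ a b : ℝ, ∑ j : Fin k, (if (j:ℕ) < k - 1 then a else b)
        = ((k:ℝ) - 1) * a + b := by
      intro a b
      rw [Finset.sum_ite]
      have hcard2 : (Finset.univ.filter (fun j : Fin k => ¬ (j:ℕ) < k - 1)).card = 1 := by
        have := Finset.card_filter_add_card_filter_not
          (s := (Finset.univ : Finset (Fin k))) (p := fun j : Fin k => (j:ℕ) < k - 1)
        simp only [Finset.card_univ, Fintype.card_fin] at this
        have hI' : (Finset.univ.filter (fun j : Fin k => (j:ℕ) < k - 1)).card = k - 1 :=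
          hIcard
        omega
      simp only [Finset.sum_const, ← hIdef, hIcard, hcard2, one_nsmul, nsmul_eq_mul]
      rw [Nat.cast_sub (by omega), Nat.cast_one]
      ring
    simp_rw [hterm, Finset.sum_ite_irrel, hsum_ite]
    rw [hc]
    field_simp
    ring
  -- UPPER BOUND: each coupling gives a multicoupling
  have hup : ∀ v ∈ SB, c * v ∈ SA := by
    intro v hv
    obtain ⟨γ, hγ0, hγ1, hγr, hγc, hγv⟩ := hv
    set π : (Fin k → Fin N) → ℝ :=
      fun t => if t = e (t i0, t last) then γ (t i0) (t last) else 0 with hπ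
    have hπe : ∀ p, π (e p) = γ p.1 p.2 := by
      intro p
      show (if e p = e (e p i0, e p last) then γ (e p i0) (e p last) else 0) = γ p.1 p.2
      rw [he_i0, he_last]
      simp
    have hvan : ∀ (g : (Fin k → Fin N) → ℝ),
        (∀ t, π t = 0 → g t = 0) → ∑ t, g t = ∑ p, g (e p) := by
      intro g hg
      refine sum_range_inj e he_inj g fun t ht => ?_
      by_contra h
      push_neg at h
      apply ht
      apply hg
      show (if t = e (t i0, t last) then γ (t i0) (t last) else 0) = 0
      rw [if_neg]
      intro hcontra
      exact h _ hcontra.symm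
    refine ⟨π, ⟨fun t => ?_, ?_, fun i j => ?_⟩, ?_⟩
    · show (0:ℝ) ≤ if t = e (t i0, t last) then γ (t i0) (t last) else 0
      split_ifs with h
      · exact hγ0 _ _
      · exact le_refl 0
    · rw [hvan π (fun t h => h)]
      simp_rw [hπe]
      rw [Fintype.sum_prod_type]
      exact hγ1
    · rw [Finset.sum_filter]
      rw [hvan _ (fun t h0 => by rw [h0, ite_self])]
      simp_rw [hπe]
      rcases hlast_or i with hi | hi
      · have he_i : ∀ p : Fin N × Fin N, e p i = p.1 := by
          intro p; simp [he, hi]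
        simp_rw [he_i]
        rw [Fintype.sum_prod_type]
        have h1 : ∀ a : Fin N, ∑ b, (if a = j then γ a b else 0)
            = if a = j then α a else 0 := by
          intro a; split_ifs with h
          · exact hγr a
          · simp
        simp_rw [h1]
        rw [Finset.sum_ite_eq' Finset.univ j (fun a => α a)]
        simp [hμ₁ i hi]
      · subst hi
        simp_rw [he_last]
        rw [Fintype.sum_prod_type]
        have h1 : ∀ a : Fin N, ∑ b, (if b = j then γ a b else 0) = γ a j := by
          intro a
          rw [Finset.sum_ite_eq' Finset.univ j (fun b => γ a b)]
          simp
        simp_rw [h1]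
        rw [hγc j, hμ₂]
    · rw [hvan (fun t => motCost x t * π t) (fun t h0 => mul_eq_zero_of_right _ h0)]
      simp_rw [hπe, hcost_e]
      rw [hγv, Fintype.sum_prod_type, Finset.mul_sum]
      refine Finset.sum_congr rfl fun a _ => ?_
      rw [Finset.mul_sum]
      refine Finset.sum_congr rfl fun b _ => ?_
      ring
  -- LOWER BOUND
  have hlow : ∀ w ∈ SA, c * sInf SB ≤ w := by
    intro w hw
    obtain ⟨π, ⟨hπ0, hπ1, hπm⟩, hwv⟩ := hw
    set γ : Fin N → Fin N → ℝ := fun j l =>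
      ((k:ℝ) - 1)⁻¹ * ∑ i ∈ I,
        ∑ t ∈ Finset.univ.filter (fun t : Fin k → Fin N => t i = j ∧ t last = l), π t
      with hγ
    -- collecting fibers against a weight
    have hcollect : ∀ i : Fin k,
        ∑ j, ∑ l, ‖x j - x l‖ ^ 2 *
          (∑ t ∈ Finset.univ.filter (fun t : Fin k → Fin N => t i = j ∧ t last = l), π t)
        = ∑ t, ‖x (t i) - x (t last)‖ ^ 2 * π t := by
      intro i
      rw [← Finset.sum_fiberwise Finset.univ (fun t : Fin k → Fin N => (t i, t last))
        (fun t => ‖x (t i) - x (t last)‖ ^ 2 * π t), Fintype.sum_prod_type]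
      refine Finset.sum_congr rfl fun j _ => Finset.sum_congr rfl fun l _ => ?_
      have hfe : Finset.univ.filter (fun t : Fin k → Fin N => (t i, t last) = (j, l))
          = Finset.univ.filter (fun t : Fin k → Fin N => t i = j ∧ t last = l) := by
        apply Finset.filter_congr
        intro t _
        simp [Prod.ext_iff]
      rw [hfe, Finset.mul_sum]
      refine (Finset.sum_congr rfl fun t ht => ?_).symm
      obtain ⟨-, h1, h2⟩ := Finset.mem_filter.1 ht
      rw [h1, h2]
    -- row marginals of fibers
    have hrow : ∀ i : Fin k, ∀ j : Fin N,
        ∑ l, ∑ t ∈ Finset.univ.filter (fun t : Fin k → Fin N => t i = j ∧ t last = l), π t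
          = μ i j := by
      intro i j
      rw [← hπm i j,
        ← Finset.sum_fiberwise (Finset.univ.filter fun t : Fin k → Fin N => t i = j)
          (fun t => t last) π]
      refine Finset.sum_congr rfl fun l _ => ?_
      rw [Finset.filter_filter]
    have hcol : ∀ i : Fin k, ∀ l : Fin N,
        ∑ j, ∑ t ∈ Finset.univ.filter (fun t : Fin k → Fin N => t i = j ∧ t last = l), π t
          = μ last l := by
      intro i l
      rw [← hπm last l,
        ← Finset.sum_fiberwise (Finset.univ.filter fun t : Fin k → Fin N => t last = l)
          (fun t => t i) π]
      refine Finset.sum_congr rfl fun j _ => ?_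
      rw [Finset.filter_filter]
      apply Finset.sum_congr _ (fun _ _ => rfl)
      apply Finset.filter_congr
      intro t _
      exact and_comm
    -- γ is a coupling
    have hγ0' : ∀ j l, 0 ≤ γ j l := by
      intro j l
      refine mul_nonneg (by positivity) ?_
      exact Finset.sum_nonneg fun i _ => Finset.sum_nonneg fun t _ => hπ0 t
    have hγrow : ∀ j, ∑ l, γ j l = α j := by
      intro j
      simp only [hγ]
      rw [← Finset.mul_sum, Finset.sum_comm]
      have h1 : ∀ i ∈ I, ∑ l, ∑ t ∈ Finset.univ.filter
          (fun t : Fin k → Fin N => t i = j ∧ t last = l), π t = α j := by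
        intro i hi
        rw [hrow i j, hμ₁ i (hmemI i hi)]
      rw [Finset.sum_congr rfl h1, Finset.sum_const, nsmul_eq_mul, hIcast,
        ← mul_assoc, inv_mul_cancel₀ hk1, one_mul]
    have hγcol : ∀ l, ∑ j, γ j l = β l := by
      intro l
      simp only [hγ]
      rw [← Finset.mul_sum, Finset.sum_comm]
      have h1 : ∀ i ∈ I, ∑ j, ∑ t ∈ Finset.univ.filter
          (fun t : Fin k → Fin N => t i = j ∧ t last = l), π t = β l := by
        intro i hi
        rw [hcol i l, hμ₂]
      rw [Finset.sum_congr rfl h1, Finset.sum_const, nsmul_eq_mul, hIcast,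
        ← mul_assoc, inv_mul_cancel₀ hk1, one_mul]
    have hγ1 : ∑ j, ∑ l, γ j l = 1 := by
      simp_rw [hγrow]; exact hα.2
    set V : ℝ := ∑ j, ∑ l, ‖x j - x l‖ ^ 2 * γ j l with hV
    have hVB : V ∈ SB := ⟨γ, hγ0', hγ1, hγrow, hγcol, rfl⟩
    -- value of γ
    have hVval : V = ((k:ℝ) - 1)⁻¹ *
        ∑ i ∈ I, ∑ t, ‖x (t i) - x (t last)‖ ^ 2 * π t := by
      have step1 : ∀ j l : Fin N, ‖x j - x l‖ ^ 2 * γ j l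
          = ((k:ℝ) - 1)⁻¹ * ∑ i ∈ I, ‖x j - x l‖ ^ 2 *
            (∑ t ∈ Finset.univ.filter (fun t : Fin k → Fin N => t i = j ∧ t last = l), π t) := by
        intro j l
        simp only [hγ]
        rw [mul_left_comm, Finset.mul_sum]
      calc V = ∑ j, ∑ l, ‖x j - x l‖ ^ 2 * γ j l := hV
        _ = ((k:ℝ) - 1)⁻¹ * ∑ j, ∑ l, ∑ i ∈ I, ‖x j - x l‖ ^ 2 *
            (∑ t ∈ Finset.univ.filter (fun t : Fin k → Fin N => t i = j ∧ t last = l), π t) := by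
          simp_rw [step1, ← Finset.mul_sum]
        _ = ((k:ℝ) - 1)⁻¹ * ∑ j, ∑ i ∈ I, ∑ l, ‖x j - x l‖ ^ 2 *
            (∑ t ∈ Finset.univ.filter (fun t : Fin k → Fin N => t i = j ∧ t last = l), π t) := by
          congr 1
          exact Finset.sum_congr rfl fun j _ => Finset.sum_comm
        _ = ((k:ℝ) - 1)⁻¹ * ∑ i ∈ I, ∑ j, ∑ l, ‖x j - x l‖ ^ 2 *
            (∑ t ∈ Finset.univ.filter (fun t : Fin k → Fin N => t i = j ∧ t last = l), π t) := by
          congr 1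
          exact Finset.sum_comm
        _ = ((k:ℝ) - 1)⁻¹ * ∑ i ∈ I, ∑ t, ‖x (t i) - x (t last)‖ ^ 2 * π t := by
          congr 1
          exact Finset.sum_congr rfl fun i _ => hcollect i
    -- pointwise cost lower bound
    have hptwise : ∀ t : Fin k → Fin N,
        ((k:ℝ) ^ 2)⁻¹ * ∑ i ∈ I, ‖x (t i) - x (t last)‖ ^ 2 ≤ motCost x t := by
      intro t
      rw [motCost_eq hkpos]
      set H : Fin k → Fin k → ℝ := fun i j => ‖x (t i) - x (t j)‖ ^ 2 with hH
      have hHnn : ∀ i j, 0 ≤ H i j := fun i j => by rw [hH]; positivity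
      have herase : (Finset.univ : Finset (Fin k)).erase last = I := by
        ext i
        simp only [Finset.mem_erase, Finset.mem_univ, and_true, hIdef,
          Finset.mem_filter, true_and]
        constructor
        · intro hne
          rcases hlast_or i with h | h
          · exact h
          · exact absurd h hne
        · intro hlt heq
          rw [heq] at hlt
          exact lt_irrefl _ hlt
      have h1 : ∑ i ∈ I, H i last ≤ ∑ i, H i last :=
        Finset.sum_le_sum_of_subset_of_nonneg (Finset.subset_univ I)
          (fun i _ _ => hHnn _ _)
      have h2 : ∑ j ∈ I, H last j ≤ ∑ j ∈ I, ∑ i, H i j :=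
        Finset.sum_le_sum fun j _ =>
          Finset.single_le_sum (fun i _ => hHnn i j) (Finset.mem_univ last)
      have hsym : ∑ j ∈ I, H last j = ∑ j ∈ I, H j last :=
        Finset.sum_congr rfl fun j _ => by
          show ‖x (t last) - x (t j)‖ ^ 2 = ‖x (t j) - x (t last)‖ ^ 2
          rw [norm_sub_rev]
      have hsplit : ∑ i, ∑ j, H i j = ∑ i, H i last + ∑ j ∈ I, ∑ i, H i j := by
        rw [Finset.sum_comm, ← Finset.add_sum_erase Finset.univ
          (fun j => ∑ i, H i j) (Finset.mem_univ last), herase]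
      have hineq : 2 * ∑ i ∈ I, H i last ≤ ∑ i, ∑ j, H i j := by
        rw [hsplit]
        linarith [h1, h2, hsym]
      have h4 : ((k:ℝ) ^ 2)⁻¹ * ∑ i ∈ I, H i last
          = (2 * (k:ℝ) ^ 2)⁻¹ * (2 * ∑ i ∈ I, H i last) := by
        rw [mul_inv]
        ring
      have h5 : ∀ i, ‖x (t i) - x (t last)‖ ^ 2 = H i last := fun i => rfl
      simp_rw [h5]
      rw [h4]
      exact mul_le_mul_of_nonneg_left hineq (by positivity)
    -- put it together
    have hlb1 : ∑ t, ((k:ℝ) ^ 2)⁻¹ * (∑ i ∈ I, ‖x (t i) - x (t last)‖ ^ 2) * π t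
        ≤ ∑ t, motCost x t * π t :=
      Finset.sum_le_sum fun t _ => mul_le_mul_of_nonneg_right (hptwise t) (hπ0 t)
    have hlb2 : ∑ t, ((k:ℝ) ^ 2)⁻¹ * (∑ i ∈ I, ‖x (t i) - x (t last)‖ ^ 2) * π t
        = c * V := by
      calc ∑ t, ((k:ℝ) ^ 2)⁻¹ * (∑ i ∈ I, ‖x (t i) - x (t last)‖ ^ 2) * π t
          = ((k:ℝ) ^ 2)⁻¹ * ∑ t, ∑ i ∈ I, ‖x (t i) - x (t last)‖ ^ 2 * π t := by
            rw [Finset.mul_sum]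
            exact Finset.sum_congr rfl fun t _ => by rw [mul_assoc, Finset.sum_mul]
        _ = ((k:ℝ) ^ 2)⁻¹ * ∑ i ∈ I, ∑ t, ‖x (t i) - x (t last)‖ ^ 2 * π t := by
            rw [Finset.sum_comm]
        _ = c * V := by
            rw [hVval, hc]
            field_simp
    calc c * sInf SB ≤ c * V := mul_le_mul_of_nonneg_left (csInf_le hBddB hVB) hcpos.le
      _ = ∑ t, ((k:ℝ) ^ 2)⁻¹ * (∑ i ∈ I, ‖x (t i) - x (t last)‖ ^ 2) * π t := hlb2.symm
      _ ≤ ∑ t, motCost x t * π t := hlb1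
      _ = w := hwv.symm
  -- ASSEMBLY
  have hAne : SA.Nonempty := by
    obtain ⟨v, hv⟩ := hBne
    exact ⟨c * v, hup v hv⟩
  have hub : sInf SA ≤ c * sInf SB := by
    have h : ∀ v ∈ SB, sInf SA / c ≤ v := by
      intro v hv
      have h1 : sInf SA ≤ c * v := csInf_le hBddA (hup v hv)
      rw [div_le_iff₀ hcpos]
      linarith
    have h2 : sInf SA / c ≤ sInf SB := le_csInf hBne h
    rw [div_le_iff₀ hcpos] at h2
    linarith
  have hlb : c * sInf SB ≤ sInf SA := le_csInf hAne hlow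
  rw [hMOT, hW]
  linarith
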